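/- For all positive integers s and t, the Ramsey number R(s,t) satisfies R(s,t) ≤ binom(s+t-2, t-1); that is, every graph on binom(s+t-2, t-1) vertices contains a clique of size s or an independent set of size t. -/
import Mathlib

open Finset

lemma ramsey_key : ∀ (n s t : ℕ), 1 ≤ s → 1 ≤ t → s + t ≤ n →
    ∀ {V : Type} [DecidableEq V] (G : SimpleGraph V) (A : Finset V),
    (s + t - 2).choose (t - 1) ≤ A.card →
    (∃ S ⊆ A, G.IsNClique s S) ∨ (∃ S ⊆ A, Gᶜ.IsNClique t S) := by
  intro n
  induction n with
  | zero => intro s t hs ht hn; omega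
  | succ n ih =>
    intro s t hs ht hn V _ G A hA
    classical
    -- A is nonempty
    have hb1 : 1 ≤ (s + t - 2).choose (t - 1) :=
      Nat.choose_pos (by omega)
    obtain ⟨v, hv⟩ : A.Nonempty := card_pos.mp (by omega)
    rcases Nat.lt_or_ge s 2 with hs2 | hs2
    · left
      refine ⟨{v}, by simpa using hv, ?_⟩
      have : s = 1 := by omega
      subst this
      exact SimpleGraph.isNClique_one.mpr ⟨v, rfl⟩
    rcases Nat.lt_or_ge t 2 with ht2 | ht2
    · right
      refine ⟨{v}, by simpa using hv, ?_⟩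
      have : t = 1 := by omega
      subst this
      exact SimpleGraph.isNClique_one.mpr ⟨v, rfl⟩
    -- now s, t ≥ 2
    obtain ⟨a, rfl⟩ : ∃ a, s = a + 2 := ⟨s - 2, by omega⟩
    obtain ⟨b, rfl⟩ : ∃ b, t = b + 2 := ⟨t - 2, by omega⟩
    set NA := (A.erase v).filter (fun w => G.Adj v w) with hNA
    set NB := (A.erase v).filter (fun w => ¬ G.Adj v w) with hNB
    have hsplit : NA.card + NB.card = A.card - 1 := by
      rw [hNA, hNB, Finset.card_filter_add_card_filter_not]
      rw [Finset.card_erase_of_mem hv]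
    have hpascal : (a + 2 + (b + 2) - 2).choose (b + 2 - 1)
        = (a + b + 1).choose b + (a + b + 1).choose (b + 1) := by
      have h1 : a + 2 + (b + 2) - 2 = (a + b + 1) + 1 := by omega
      have h2 : b + 2 - 1 = b + 1 := by omega
      rw [h1, h2, Nat.choose_succ_succ]
    rcases Nat.lt_or_ge NA.card ((a + 1 + (b + 2) - 2).choose (b + 2 - 1)) with hna | hna
    · -- NB is big: apply IH with (s, t-1)
      have hnb : (a + 2 + (b + 1) - 2).choose (b + 1 - 1) ≤ NB.card := by
        have e1 : a + 2 + (b + 1) - 2 = a + b + 1 := by omega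
        have e2 : b + 1 - 1 = b := by omega
        have e3 : a + 1 + (b + 2) - 2 = a + b + 1 := by omega
        have e4 : b + 2 - 1 = b + 1 := by omega
        rw [e1, e2]
        rw [e3, e4] at hna
        omega
      rcases ih (a + 2) (b + 1) (by omega) (by omega) (by omega) G NB hnb with
        ⟨S, hS, hSc⟩ | ⟨S, hS, hSc⟩
      · exact Or.inl ⟨S, hS.trans ((filter_subset _ _).trans (erase_subset _ _)), hSc⟩
      · right
        refine ⟨insert v S, ?_, ?_⟩
        · exact insert_subset hv (hS.trans ((filter_subset _ _).trans (erase_subset _ _)))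
        · refine hSc.insert fun w hw => ?_
          have hw' := hS hw
          rw [hNB, mem_filter, mem_erase] at hw'
          exact ⟨fun h => hw'.1.1 h.symm, hw'.2⟩
    · -- NA is big: apply IH with (s-1, t)
      rcases ih (a + 1) (b + 2) (by omega) (by omega) (by omega) G NA hna with
        ⟨S, hS, hSc⟩ | ⟨S, hS, hSc⟩
      · left
        refine ⟨insert v S, ?_, ?_⟩
        · exact insert_subset hv (hS.trans ((filter_subset _ _).trans (erase_subset _ _)))
        · refine hSc.insert fun w hw => ?_
          have hw' := hS hw
          rw [hNA, mem_filter] at hw'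
          exact hw'.2
      · exact Or.inr ⟨S, hS.trans ((filter_subset _ _).trans (erase_subset _ _)), hSc⟩

/-- Erdős–Szekeres bound on Ramsey numbers: every graph on `(s+t-2).choose (t-1)`
vertices contains a clique of size `s` or an independent set of size `t`. -/
theorem ramsey_erdos_szekeres (s t : ℕ) (hs : 1 ≤ s) (ht : 1 ≤ t)
    (G : SimpleGraph (Fin ((s + t - 2).choose (t - 1)))) :
    (∃ S, G.IsNClique s S) ∨ (∃ S, Gᶜ.IsNClique t S) := by
  have := ramsey_key (s + t) s t hs ht le_rfl G Finset.univ
    (by simp)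
  rcases this with ⟨S, _, h⟩ | ⟨S, _, h⟩
  · exact Or.inl ⟨S, h⟩
  · exact Or.inr ⟨S, h⟩
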